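/- Let λ, μ ∈ ℝ with μ > 0 and 2μ + 3λ > 0, let Q(G) := (λ/2)(tr G)² + μ|sym G|² on 3×3 real matrices, and define Q₂(B) := inf_{d∈ℝ³} Q(ι(B) + sym(d⊗e₃)) for B ∈ ℝ^{2×2}_sym. Then for every U ∈ ℝ^{2×2}_sym, the infimum over pairs A, M ∈ ℝ^{2×2}_sym of ∫_{−1/2}^{1/2} Q₂( t·A + M + 𝟙(t>0)·(1/2)U ) dt is attained and equals (1/64)·( (μλ/(λ+2μ))(tr U)² + μ|U|² ). (Isotropic representation of the residual energy E_res.) -/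

import Mathlib

open MeasureTheory Matrix Filter Topology

noncomputable section

/-- 2×2 real matrices. -/
abbrev M2 : Type := Matrix (Fin 2) (Fin 2) ℝ
/-- 3×3 real matrices. -/
abbrev M3 : Type := Matrix (Fin 3) (Fin 3) ℝ

/-- squared Frobenius norm of a 2×2 matrix -/
def frobSq2 (A : M2) : ℝ := ∑ i, ∑ j, (A i j) ^ 2

/-- squared Frobenius norm of a 3×3 matrix -/
def frobSq3 (A : M3) : ℝ := ∑ i, ∑ j, (A i j) ^ 2

/-- symmetric part of a matrix: `sym G = (G + Gᵀ)/2` -/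
def symPart (G : M3) : M3 := (1 / 2 : ℝ) • (G + Gᵀ)

/-- `ι A` : the 3×3 matrix with upper-left 2×2 block `A` and zeros elsewhere -/
def iota (A : M2) : M3 :=
  Matrix.of fun i j =>
    if hi : (i : ℕ) < 2 then (if hj : (j : ℕ) < 2 then A ⟨i, hi⟩ ⟨j, hj⟩ else 0) else 0

/-- `d ⊗ e₃` : the 3×3 matrix whose third column is `d` and whose other entries vanish -/
def tensorE3 (d : Fin 3 → ℝ) : M3 :=
  Matrix.of fun i j => if j = (2 : Fin 3) then d i else 0

/-- auxiliary: the 2D quadratic form `a (tr X)² + μ |X|²` in entries -/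
def qF (a mu x00 x01 x10 x11 : ℝ) : ℝ := a*(x00+x11)^2 + mu*(x00^2+x01^2+x10^2+x11^2)

/-- auxiliary: twice the polarization of `qF` -/
def bF (a mu x00 x01 x10 x11 y00 y01 y10 y11 : ℝ) : ℝ :=
  2*(a*(x00+x11)*(y00+y11) + mu*(x00*y00+x01*y01+x10*y10+x11*y11))

lemma q_nonneg (a mu x y z w : ℝ) (hmu : 0 < mu) (ha : 0 < mu + 2*a) :
    0 ≤ qF a mu x y z w := by
  rw [qF]
  nlinarith [mul_nonneg ha.le (sq_nonneg (x+w)), mul_nonneg hmu.le (sq_nonneg (x-w)),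
    mul_nonneg hmu.le (sq_nonneg y), mul_nonneg hmu.le (sq_nonneg z)]

lemma poly_int (p₂ p₁ p₀ a b : ℝ) :
    ∫ t in a..b, (p₂*t^2 + p₁*t + p₀) =
      (p₂/3*b^3 + p₁/2*b^2 + p₀*b) - (p₂/3*a^3 + p₁/2*a^2 + p₀*a) := by
  apply intervalIntegral.integral_eq_sub_of_hasDerivAt
  · intro t ht
    have h := (((hasDerivAt_pow 3 t).const_mul (p₂/3)).add
      ((hasDerivAt_pow 2 t).const_mul (p₁/2))).add ((hasDerivAt_id t).const_mul p₀)
    convert h using 1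
    · rfl
    · push_cast
      ring
  · apply Continuous.intervalIntegrable
    continuity

lemma int_piece (p₂ p₁ p₀ r₁ r₀ : ℝ) :
    ∫ t in Set.Ioo (-(1:ℝ)/2) (1/2),
      (p₂*t^2 + p₁*t + p₀ + (if 0 < t then (1:ℝ) else 0)*(r₁*t+r₀))
    = p₂/12 + p₀ + r₁/8 + r₀/2 := by
  have hsplit : Set.Ioo (-(1:ℝ)/2) (1/2) = Set.Ioc (-(1:ℝ)/2) 0 ∪ Set.Ioo (0:ℝ) (1/2) := by
    ext x
    simp only [Set.mem_Ioo, Set.mem_union, Set.mem_Ioc]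
    constructor
    · rintro ⟨h1, h2⟩
      rcases le_or_gt x 0 with h | h
      · exact Or.inl ⟨h1, h⟩
      · exact Or.inr ⟨h, h2⟩
    · rintro (⟨h1, h2⟩ | ⟨h1, h2⟩) <;> constructor <;> linarith
  have hdisj : Disjoint (Set.Ioc (-(1:ℝ)/2) 0) (Set.Ioo (0:ℝ) (1/2)) := by
    rw [Set.disjoint_left]
    rintro x ⟨_, hx2⟩ ⟨hx3, _⟩
    exact absurd hx3 (not_lt.mpr hx2)
  have hc1 : Continuous fun t : ℝ => p₂*t^2 + p₁*t + p₀ := by continuity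
  have hc2 : Continuous fun t : ℝ => p₂*t^2 + (p₁+r₁)*t + (p₀+r₀) := by continuity
  have hint1 : IntegrableOn (fun t : ℝ =>
      p₂*t^2 + p₁*t + p₀ + (if 0 < t then (1:ℝ) else 0)*(r₁*t+r₀))
      (Set.Ioc (-(1:ℝ)/2) 0) := by
    apply (hc1.integrableOn_Ioc).congr_fun ?_ measurableSet_Ioc
    intro t ht
    simp [not_lt.mpr ht.2]
  have hint2 : IntegrableOn (fun t : ℝ =>
      p₂*t^2 + p₁*t + p₀ + (if 0 < t then (1:ℝ) else 0)*(r₁*t+r₀))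
      (Set.Ioo (0:ℝ) (1/2)) := by
    apply ((hc2.integrableOn_Ioc.mono_set Set.Ioo_subset_Ioc_self)).congr_fun ?_ measurableSet_Ioo
    intro t ht
    simp only [if_pos ht.1]
    ring
  rw [hsplit, MeasureTheory.setIntegral_union hdisj measurableSet_Ioo hint1 hint2]
  have e1 : ∫ t in Set.Ioc (-(1:ℝ)/2) 0,
      (p₂*t^2 + p₁*t + p₀ + (if 0 < t then (1:ℝ) else 0)*(r₁*t+r₀))
      = ∫ t in Set.Ioc (-(1:ℝ)/2) 0, (p₂*t^2 + p₁*t + p₀) := by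
    apply MeasureTheory.setIntegral_congr_fun measurableSet_Ioc
    intro t ht
    simp [not_lt.mpr ht.2]
  have e2 : ∫ t in Set.Ioo (0:ℝ) (1/2),
      (p₂*t^2 + p₁*t + p₀ + (if 0 < t then (1:ℝ) else 0)*(r₁*t+r₀))
      = ∫ t in Set.Ioo (0:ℝ) (1/2), (p₂*t^2 + (p₁+r₁)*t + (p₀+r₀)) := by
    apply MeasureTheory.setIntegral_congr_fun measurableSet_Ioo
    intro t ht
    simp only [if_pos ht.1]
    ring
  rw [e1, e2, ← MeasureTheory.integral_Ioc_eq_integral_Ioo,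
    ← intervalIntegral.integral_of_le (by norm_num : (-(1:ℝ)/2) ≤ 0),
    ← intervalIntegral.integral_of_le (by norm_num : (0:ℝ) ≤ 1/2),
    poly_int, poly_int]
  ring

lemma scalar_bound (lam mu s F x y z : ℝ) (hmu : 0 < mu) (hK : 0 < lam + 2*mu) :
    mu * lam / (lam + 2*mu) * s^2 + mu * F ≤
      lam/2 * (s + z)^2 + mu * (F + x^2/2 + y^2/2 + z^2) := by
  have ha : mu * lam / (lam + 2*mu) * (lam + 2*mu) = mu * lam := by rw [div_mul_cancel₀ _ hK.ne']
  nlinarith [sq_nonneg (lam*s + (lam+2*mu)*z), mul_pos hmu hK, sq_nonneg x, sq_nonneg y,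
    mul_nonneg (mul_nonneg hmu.le hK.le) (sq_nonneg x),
    mul_nonneg (mul_nonneg hmu.le hK.le) (sq_nonneg y)]

lemma scalar_eq (lam mu s F : ℝ) (hK : 0 < lam + 2*mu) :
    lam/2 * (s + (-lam*s/(lam+2*mu)))^2 +
      mu * (F + (0:ℝ)^2/2 + (0:ℝ)^2/2 + (-lam*s/(lam+2*mu))^2)
    = mu * lam / (lam + 2*mu) * s^2 + mu * F := by
  have hne : (lam + 2*mu) ≠ 0 := hK.ne'
  field_simp
  ring

lemma Q2_eval (lam mu : ℝ) (hmu : 0 < mu) (hK : 0 < lam + 2*mu)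
    (Q : M3 → ℝ)
    (hQ : ∀ G, Q G = lam / 2 * (Matrix.trace G) ^ 2 + mu * frobSq3 (symPart G))
    (Q2 : M2 → ℝ)
    (hQ2 : ∀ B, Q2 B = ⨅ d : Fin 3 → ℝ, Q (iota B + symPart (tensorE3 d)))
    (B : M2) (hB : B.IsSymm) :
    Q2 B = qF (mu * lam / (lam + 2 * mu)) mu (B 0 0) (B 0 1) (B 1 0) (B 1 1) := by
  have h10 : B 1 0 = B 0 1 := hB.apply 0 1
  have key : ∀ d : Fin 3 → ℝ, Q (iota B + symPart (tensorE3 d)) =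
      lam/2 * ((B 0 0 + B 1 1) + d 2)^2 +
      mu * (((B 0 0)^2 + (B 0 1)^2 + (B 1 0)^2 + (B 1 1)^2) + (d 0)^2/2 + (d 1)^2/2 + (d 2)^2) := by
    intro d
    rw [hQ]
    simp [Matrix.trace, Matrix.diag, frobSq3, symPart, iota, tensorE3, Fin.sum_univ_three,
      Matrix.add_apply, Matrix.smul_apply, Matrix.transpose_apply, Matrix.of_apply, h10]
    ring
  rw [hQ2, qF]
  have hb : ∀ d : Fin 3 → ℝ,
      mu * lam / (lam + 2*mu) * (B 0 0 + B 1 1)^2 +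
        mu * ((B 0 0)^2 + (B 0 1)^2 + (B 1 0)^2 + (B 1 1)^2) ≤
      Q (iota B + symPart (tensorE3 d)) := by
    intro d
    rw [key]
    exact scalar_bound lam mu _ _ (d 0) (d 1) (d 2) hmu hK
  apply le_antisymm
  · have h := ciInf_le ⟨_, Set.forall_mem_range.2 hb⟩
      ![0, 0, -lam*(B 0 0 + B 1 1)/(lam+2*mu)]
    refine h.trans_eq ?_
    rw [key]
    simp only [Matrix.cons_val_zero, Matrix.cons_val_one, Matrix.head_cons,
      Matrix.cons_val_two, Matrix.tail_cons]
    rw [scalar_eq lam mu _ _ hK]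
  · exact le_ciInf hb

theorem statement6 (lam mu : ℝ) (hmu : 0 < mu) (hbulk : 0 < 2 * mu + 3 * lam)
    (Q : M3 → ℝ)
    (hQ : ∀ G, Q G = lam / 2 * (Matrix.trace G) ^ 2 + mu * frobSq3 (symPart G))
    (Q2 : M2 → ℝ)
    (hQ2 : ∀ B, Q2 B = ⨅ d : Fin 3 → ℝ, Q (iota B + symPart (tensorE3 d)))
    (U : M2) (hU : U.IsSymm) :
    IsLeast
      (Set.range fun p : {M : M2 // M.IsSymm} × {M : M2 // M.IsSymm} =>
        ∫ t in Set.Ioo (-(1 : ℝ) / 2) (1 / 2),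
          Q2 (t • p.1.val + p.2.val + (if 0 < t then (1 : ℝ) else 0) • ((1 / 2 : ℝ) • U)))
      ((1 / 64) * (mu * lam / (lam + 2 * mu) * (Matrix.trace U) ^ 2 + mu * frobSq2 U)) := by
  have hK : (0:ℝ) < lam + 2*mu := by nlinarith
  set a := mu * lam / (lam + 2 * mu) with ha
  have hmu2a : 0 < mu + 2*a := by
    have h : mu + 2*a = mu*(3*lam+2*mu)/(lam+2*mu) := by
      rw [ha, eq_div_iff hK.ne', add_mul, mul_assoc (2:ℝ), div_mul_cancel₀ _ hK.ne']; ring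
    rw [h]
    exact div_pos (by nlinarith) hK
  have hQ2e : ∀ B : M2, B.IsSymm → Q2 B = qF a mu (B 0 0) (B 0 1) (B 1 0) (B 1 1) := by
    intro B hB
    rw [Q2_eval lam mu hmu hK Q hQ Q2 hQ2 B hB, ha]
  -- the explicit value of the integral for symmetric A, M
  have hformula : ∀ (A M : M2), A.IsSymm → M.IsSymm →
      (∫ t in Set.Ioo (-(1:ℝ)/2) (1/2),
        Q2 (t • A + M + (if 0 < t then (1:ℝ) else 0) • ((1/2:ℝ) • U)))
      = qF a mu (A 0 0) (A 0 1) (A 1 0) (A 1 1) / 12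
        + qF a mu (M 0 0) (M 0 1) (M 1 0) (M 1 1)
        + bF a mu (A 0 0) (A 0 1) (A 1 0) (A 1 1)
            (U 0 0/2) (U 0 1/2) (U 1 0/2) (U 1 1/2) / 8
        + (bF a mu (M 0 0) (M 0 1) (M 1 0) (M 1 1)
            (U 0 0/2) (U 0 1/2) (U 1 0/2) (U 1 1/2)
           + qF a mu (U 0 0/2) (U 0 1/2) (U 1 0/2) (U 1 1/2)) / 2 := by
    intro A M hA hM
    have hpt : ∀ t : ℝ,
        Q2 (t • A + M + (if 0 < t then (1:ℝ) else 0) • ((1/2:ℝ) • U)) =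
        qF a mu (A 0 0) (A 0 1) (A 1 0) (A 1 1) * t^2
        + bF a mu (A 0 0) (A 0 1) (A 1 0) (A 1 1)
            (M 0 0) (M 0 1) (M 1 0) (M 1 1) * t
        + qF a mu (M 0 0) (M 0 1) (M 1 0) (M 1 1)
        + (if 0 < t then (1:ℝ) else 0) *
          (bF a mu (A 0 0) (A 0 1) (A 1 0) (A 1 1)
            (U 0 0/2) (U 0 1/2) (U 1 0/2) (U 1 1/2) * t
           + (bF a mu (M 0 0) (M 0 1) (M 1 0) (M 1 1)
                (U 0 0/2) (U 0 1/2) (U 1 0/2) (U 1 1/2)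
              + qF a mu (U 0 0/2) (U 0 1/2) (U 1 0/2) (U 1 1/2))) := by
      intro t
      have hsym : (t • A + M + (if 0 < t then (1:ℝ) else 0) • ((1/2:ℝ) • U)).IsSymm := by
        show _ᵀ = _
        rw [Matrix.transpose_add, Matrix.transpose_add, Matrix.transpose_smul,
          Matrix.transpose_smul, Matrix.transpose_smul, hA.eq, hM.eq, hU.eq]
      rw [hQ2e _ hsym]
      simp only [qF, bF, Matrix.add_apply, Matrix.smul_apply, smul_eq_mul]
      by_cases h : 0 < t <;> simp only [if_pos, if_neg, h, if_true, if_false] <;> ring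
    simp_rw [hpt]
    exact int_piece _ _ _ _ _
  have htr : Matrix.trace U = U 0 0 + U 1 1 := by
    simp [Matrix.trace, Matrix.diag, Fin.sum_univ_two]
  have hfr : frobSq2 U = (U 0 0)^2 + (U 0 1)^2 + (U 1 0)^2 + (U 1 1)^2 := by
    simp [frobSq2, Fin.sum_univ_two]
    ring
  constructor
  · -- attained at A = -(3/4)U, M = -(1/4)U
    refine ⟨⟨⟨(-(3/4):ℝ) • U, ?_⟩, ⟨(-(1/4):ℝ) • U, ?_⟩⟩, ?_⟩
    · show _ᵀ = _; rw [Matrix.transpose_smul, hU.eq]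
    · show _ᵀ = _; rw [Matrix.transpose_smul, hU.eq]
    · show (∫ t in Set.Ioo (-(1:ℝ)/2) (1/2),
          Q2 (t • ((-(3/4):ℝ) • U) + ((-(1/4):ℝ) • U)
            + (if 0 < t then (1:ℝ) else 0) • ((1/2:ℝ) • U))) = _
      rw [hformula _ _ (by show _ᵀ = _; rw [Matrix.transpose_smul, hU.eq])
        (by show _ᵀ = _; rw [Matrix.transpose_smul, hU.eq]), htr, hfr]
      simp only [qF, bF, Matrix.smul_apply, smul_eq_mul]
      ring
  · rintro x ⟨⟨⟨A, hA⟩, ⟨M, hM⟩⟩, rfl⟩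
    dsimp only
    rw [hformula A M hA hM, htr, hfr]
    have h1 := q_nonneg a mu (A 0 0 + 3/4*U 0 0) (A 0 1 + 3/4*U 0 1)
      (A 1 0 + 3/4*U 1 0) (A 1 1 + 3/4*U 1 1) hmu hmu2a
    have h2 := q_nonneg a mu (M 0 0 + 1/4*U 0 0) (M 0 1 + 1/4*U 0 1)
      (M 1 0 + 1/4*U 1 0) (M 1 1 + 1/4*U 1 1) hmu hmu2a
    simp only [qF, bF] at h1 h2 ⊢
    linarith [h1, h2]
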